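/- arXiv:2506.07176 — 3 statements merged into one kernel-verified Lean document; each statement's English description precedes it below -/
import Mathlib

section
/- Define Â(y) := ∫_{ℝᵈ} (1 − cos⟨z, y⟩) a(z) dz for y ∈ ℝᵈ. Then for every r > 0, the infimum of Â(y) over the set {y ∈ ℝᵈ : |y| ≥ r} is strictly positive. -/
open MeasureTheory Complex
open scoped Real InnerProductSpace ENNReal Pointwise

noncomputable section

/-- `ℝᵈ` as a Euclidean space. -/
abbrev Ed (d : ℕ) : Type := EuclideanSpace ℝ (Fin d)

lemma hyperplane_null (d : ℕ) (y : Ed d) (hy : y ≠ 0) (c : ℝ) :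
    (volume : Measure (Ed d)) {z : Ed d | ⟪z, y⟫_ℝ = c} = 0 := by
  set K : Submodule ℝ (Ed d) := LinearMap.ker (innerSL ℝ y : Ed d →ₗ[ℝ] ℝ) with hKdef
  have hK : K ≠ ⊤ := by
    intro h
    have hyK : y ∈ K := h ▸ Submodule.mem_top
    rw [hKdef, LinearMap.mem_ker] at hyK
    simp only [ContinuousLinearMap.coe_coe, innerSL_apply_apply] at hyK
    exact hy (inner_self_eq_zero.mp hyK)
  have h0 : (volume : Measure (Ed d)) (K : Set (Ed d)) = 0 :=
    Measure.addHaar_submodule _ K hK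
  have hny : (‖y‖ : ℝ) ^ 2 ≠ 0 := pow_ne_zero 2 (norm_ne_zero_iff.mpr hy)
  set z0 : Ed d := (c / ‖y‖ ^ 2) • y with hz0def
  have hz0 : ⟪z0, y⟫_ℝ = c := by
    rw [hz0def, real_inner_smul_left, real_inner_self_eq_norm_sq]
    field_simp
  have hset : {z : Ed d | ⟪z, y⟫_ℝ = c} = z0 +ᵥ (K : Set (Ed d)) := by
    ext z
    simp only [Set.mem_setOf_eq, Set.mem_vadd_set_iff_neg_vadd_mem, vadd_eq_add,
      SetLike.mem_coe, hKdef, LinearMap.mem_ker, ContinuousLinearMap.coe_coe, innerSL_apply_apply]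
    have expand : ⟪y, -z0 + z⟫_ℝ = ⟪z, y⟫_ℝ - c := by
      have e1 : ⟪y, z0⟫_ℝ = c := by rw [real_inner_comm]; exact hz0
      rw [inner_add_right, inner_neg_right, e1, real_inner_comm y z]
      ring
    rw [expand]
    constructor <;> intro h <;> linarith
  rw [hset, measure_vadd, h0]

/-- with `Â(y) = ∫ (1 − cos⟨z,y⟩) a(z) dz`, for every `r > 0` the infimum of
`Â` over `{|y| ≥ r}` is strictly positive. -/
theorem statement4
    (d : ℕ) (hd : 1 ≤ d)
    (a : Ed d → ℝ)
    (ha_int : Integrable a (volume : Measure (Ed d)))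
    (ha_nonneg : ∀ᵐ x ∂(volume : Measure (Ed d)), 0 ≤ a x)
    (ha_ne : ¬ (a =ᵐ[(volume : Measure (Ed d))] 0)) :
    ∀ r : ℝ, 0 < r →
      0 < sInf ((fun y : Ed d => ∫ z, (1 - Real.cos ⟪z, y⟫_ℝ) * a z) '' {y | r ≤ ‖y‖}) := by
  intro r hr
  set A : Ed d → ℝ := fun y => ∫ z, (1 - Real.cos ⟪z, y⟫_ℝ) * a z with hAdef
  -- integrability of the integrand
  have hInt : ∀ y : Ed d,
      Integrable (fun z => (1 - Real.cos ⟪z, y⟫_ℝ) * a z) (volume : Measure (Ed d)) := by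
    intro y
    refine ha_int.bdd_mul (c := 2) ?_ (ae_of_all _ fun z => ?_)
    · exact (Continuous.aestronglyMeasurable
        (continuous_const.sub (Real.continuous_cos.comp
          (continuous_id.inner continuous_const))))
    · have h1 := Real.neg_one_le_cos (⟪z, y⟫_ℝ)
      have h2 := Real.cos_le_one (⟪z, y⟫_ℝ)
      rw [Real.norm_eq_abs, abs_le]; constructor <;> linarith
  have hIntCos : ∀ y : Ed d,
      Integrable (fun z => Real.cos ⟪z, y⟫_ℝ * a z) (volume : Measure (Ed d)) := by
    intro y
    refine ha_int.bdd_mul (c := 1) ?_ (ae_of_all _ fun z => ?_)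
    · exact (Continuous.aestronglyMeasurable
        (Real.continuous_cos.comp (continuous_id.inner continuous_const)))
    · rw [Real.norm_eq_abs]; exact Real.abs_cos_le_one _
  -- a.e. nonnegativity of the integrand
  have hae : ∀ y : Ed d, 0 ≤ᵐ[(volume : Measure (Ed d))]
      fun z => (1 - Real.cos ⟪z, y⟫_ℝ) * a z := by
    intro y
    filter_upwards [ha_nonneg] with z hz
    have := Real.cos_le_one (⟪z, y⟫_ℝ)
    exact mul_nonneg (by linarith) hz
  -- positivity of A off 0
  have hApos : ∀ y : Ed d, y ≠ 0 → 0 < A y := by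
    intro y hy
    have hnn : 0 ≤ A y := integral_nonneg_of_ae (hae y)
    rcases hnn.lt_or_eq with h | h
    · exact h
    exfalso
    have hz : (fun z => (1 - Real.cos ⟪z, y⟫_ℝ) * a z)
        =ᵐ[(volume : Measure (Ed d))] 0 :=
      (integral_eq_zero_iff_of_nonneg_ae (hae y) (hInt y)).mp h.symm
    have hS : (volume : Measure (Ed d)) {z : Ed d | Real.cos ⟪z, y⟫_ℝ = 1} = 0 := by
      have hsub : {z : Ed d | Real.cos ⟪z, y⟫_ℝ = 1} ⊆
          ⋃ n : ℤ, {z : Ed d | ⟪z, y⟫_ℝ = (n : ℝ) * (2 * Real.pi)} := by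
        intro z hz
        obtain ⟨n, hn⟩ := (Real.cos_eq_one_iff _).mp hz
        exact Set.mem_iUnion.mpr ⟨n, hn.symm⟩
      refine measure_mono_null hsub (measure_iUnion_null fun n => ?_)
      exact hyperplane_null d y hy _
    have hSc : ∀ᵐ z ∂(volume : Measure (Ed d)), Real.cos ⟪z, y⟫_ℝ ≠ 1 := by
      rw [ae_iff]
      simpa using hS
    apply ha_ne
    filter_upwards [hz, hSc] with z h1 h2
    have : (1 - Real.cos ⟪z, y⟫_ℝ) * a z = 0 := h1
    rcases mul_eq_zero.mp this with h | h
    · exact absurd (by linarith : Real.cos ⟪z, y⟫_ℝ = 1) h2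
    · exact h
  -- ∫ a > 0
  have hIa : 0 < ∫ z, a z := by
    rw [integral_pos_iff_support_of_nonneg_ae ha_nonneg ha_int]
    rw [pos_iff_ne_zero]
    intro h
    apply ha_ne
    rw [Filter.EventuallyEq, ae_iff]
    simpa [Function.support] using h
  -- continuity of A
  have hcont : Continuous A := by
    rw [hAdef]
    refine continuous_of_dominated (fun y => ?_) (fun y => ?_) (ha_int.abs.const_mul 2) ?_
    · exact (Continuous.aestronglyMeasurable
        (continuous_const.sub (Real.continuous_cos.comp
          (continuous_id.inner continuous_const)))).mul ha_int.1
    · filter_upwards with z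
      have h1 := Real.neg_one_le_cos (⟪z, y⟫_ℝ)
      have h2 := Real.cos_le_one (⟪z, y⟫_ℝ)
      have h3 : |1 - Real.cos ⟪z, y⟫_ℝ| ≤ 2 := by
        rw [abs_le]; constructor <;> linarith
      rw [Real.norm_eq_abs, abs_mul]
      exact mul_le_mul_of_nonneg_right h3 (abs_nonneg _)
    · filter_upwards with z
      exact continuous_const.sub (Real.continuous_cos.comp
        (continuous_const.inner continuous_id)) |>.mul continuous_const
  -- Riemann-Lebesgue: A tends to ∫ a at cocompact
  have haC : Integrable (fun v : Ed d => (a v : ℂ)) (volume : Measure (Ed d)) := ha_int.ofReal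
  have htend : Filter.Tendsto A (Filter.cocompact (Ed d)) (nhds (∫ z, a z)) := by
    have hRL := tendsto_integral_exp_inner_smul_cocompact (V := Ed d) (fun v => (a v : ℂ))
    have h2π : ((2 * Real.pi)⁻¹ : ℝ) ≠ 0 := by
      have := Real.pi_pos
      positivity
    have hscale : Filter.Tendsto (fun y : Ed d => ((2 * Real.pi)⁻¹ : ℝ) • y)
        (Filter.cocompact (Ed d)) (Filter.cocompact (Ed d)) := by
      have h := (Homeomorph.smulOfNeZero ((2 * Real.pi)⁻¹ : ℝ) h2π (α := Ed d)).map_cocompact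
      exact h.le
    have hcos : Filter.Tendsto (fun y : Ed d => ∫ v, Real.cos ⟪v, y⟫_ℝ * a v)
        (Filter.cocompact (Ed d)) (nhds 0) := by
      have h1 := hRL.comp hscale
      have h2 := (Complex.continuous_re.tendsto 0).comp h1
      simp only [Function.comp_def, Complex.zero_re] at h2
      refine h2.congr fun y => ?_
      have hint : Integrable
          (fun v : Ed d => Real.fourierChar (-⟪v, ((2 * Real.pi)⁻¹ : ℝ) • y⟫_ℝ) • ((a v : ℂ)))
          (volume : Measure (Ed d)) :=
        (Real.fourierIntegral_convergent_iff _).2 haC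
      rw [← RCLike.re_to_complex, ← integral_re hint]
      simp only [RCLike.re_to_complex]
      congr 1
      funext v
      rw [Circle.smul_def, Real.fourierChar_apply, real_inner_smul_right]
      have hθ : (2 * Real.pi * -((2 * Real.pi)⁻¹ * ⟪v, y⟫_ℝ)) = -⟪v, y⟫_ℝ := by
        have hπ : (2 * Real.pi) ≠ 0 := by
          have := Real.pi_pos; positivity
        field_simp
      rw [hθ]
      rw [smul_eq_mul, Complex.mul_re, Complex.ofReal_re, Complex.ofReal_im,
        Complex.exp_ofReal_mul_I_re]
      simp [Real.cos_neg]
    have hAeq : ∀ y : Ed d, A y = (∫ z, a z) - ∫ z, Real.cos ⟪z, y⟫_ℝ * a z := by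
      intro y
      have hA : A y = ∫ z, (1 - Real.cos ⟪z, y⟫_ℝ) * a z := rfl
      rw [hA, ← integral_sub ha_int (hIntCos y)]
      congr 1
      funext z
      ring
    refine Filter.Tendsto.congr (fun y => (hAeq y).symm) ?_
    simpa using tendsto_const_nhds.sub hcos
  -- eventually A y > (∫ a)/2
  have hev : ∀ᶠ y in Filter.cocompact (Ed d), (∫ z, a z) / 2 < A y :=
    htend.eventually (eventually_gt_nhds (by linarith))
  obtain ⟨K, hKc, hKsub⟩ := Filter.mem_cocompact.mp hev
  obtain ⟨R, hR⟩ := hKc.isBounded.subset_closedBall 0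
  set M : ℝ := max R r with hM
  set Kan : Set (Ed d) := Metric.closedBall 0 M \ Metric.ball 0 r with hKan
  have hKanc : IsCompact Kan := (isCompact_closedBall 0 M).diff Metric.isOpen_ball
  obtain ⟨y0, hy0⟩ : ∃ y0 : Ed d, ‖y0‖ = r := by
    refine ⟨r • EuclideanSpace.single (⟨0, hd⟩ : Fin d) (1 : ℝ), ?_⟩
    rw [norm_smul, EuclideanSpace.norm_single]
    simp [abs_of_pos hr]
  have hy0mem : y0 ∈ Kan := by
    rw [hKan]
    constructor
    · rw [Metric.mem_closedBall, dist_zero_right, hy0]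
      exact le_max_right R r
    · rw [Metric.mem_ball, dist_zero_right, hy0]
      simp
  obtain ⟨y1, hy1K, hy1min⟩ := hKanc.exists_isMinOn ⟨y0, hy0mem⟩ hcont.continuousOn
  have hy1r : r ≤ ‖y1‖ := by
    have := hy1K.2
    rw [Metric.mem_ball, dist_zero_right] at this
    linarith [not_lt.mp this]
  have hy1pos : 0 < A y1 := by
    apply hApos
    intro h0
    rw [h0, norm_zero] at hy1r
    linarith
  have hc : 0 < min (A y1) ((∫ z, a z) / 2) := lt_min hy1pos (by linarith)
  refine lt_of_lt_of_le hc (le_csInf ⟨A y0, ⟨y0, by simp [hy0], rfl⟩⟩ ?_)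
  rintro b ⟨y, hy, rfl⟩
  have hyr : r ≤ ‖y‖ := hy
  by_cases hcase : ‖y‖ ≤ M
  · refine le_trans (min_le_left _ _) (hy1min ?_)
    rw [hKan]
    constructor
    · rw [Metric.mem_closedBall, dist_zero_right]; exact hcase
    · rw [Metric.mem_ball, dist_zero_right]; exact not_lt.mpr hyr
  · have hyR : ¬ ‖y‖ ≤ R := fun h => hcase (h.trans (le_max_left R r))
    have hyK : y ∉ K := fun hmem => by
      have := hR hmem
      rw [Metric.mem_closedBall, dist_zero_right] at this
      exact hyR this
    exact le_trans (min_le_right _ _) (le_of_lt (hKsub hyK))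
end
end

section
/- Define Â(y) := ∫_{ℝᵈ} (1 − cos⟨z, y⟩) a(z) dz for y ∈ ℝᵈ. If M₂(a) < ∞, then there exists a constant C > 0, depending only on a, such that Â(ξ + 2πn) ≥ C|ξ|² for every ξ ∈ [−π,π)ᵈ and every n ∈ ℤᵈ. -/
open MeasureTheory Complex
open scoped Real InnerProductSpace ENNReal
open scoped FourierTransform

noncomputable section

/-- Inclusion of a coordinate function into `ℝᵈ`. -/
def toEd {d : ℕ} (f : Fin d → ℝ) : Ed d := WithLp.toLp 2 f

namespace Statement5Aux

variable {d : ℕ}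

lemma one_sub_cos_nonneg (t : ℝ) : 0 ≤ 1 - Real.cos t := by
  nlinarith [Real.cos_le_one t]

lemma abs_one_sub_cos_le (t : ℝ) : ‖1 - Real.cos t‖ ≤ 2 := by
  rw [Real.norm_eq_abs, abs_le]
  constructor <;> nlinarith [Real.cos_le_one t, Real.neg_one_le_cos t]

lemma quad_le_one_sub_cos {t : ℝ} (ht : |t| ≤ π) :
    2 / π ^ 2 * t ^ 2 ≤ 1 - Real.cos t := by
  have := Real.cos_le_one_sub_mul_cos_sq ht
  linarith

lemma cont_inner (y : Ed d) : Continuous fun z : Ed d => ⟪z, y⟫_ℝ :=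
  continuous_id.inner continuous_const

/-- An affine hyperplane has measure zero. -/
lemma hyperplane_null {y : Ed d} (hy : y ≠ 0) (c : ℝ) :
    (volume : Measure (Ed d)) {z | ⟪z, y⟫_ℝ = c} = 0 := by
  set w : Ed d := (c / ⟪y, y⟫_ℝ) • y with hw
  have hyy : ⟪y, y⟫_ℝ ≠ 0 := by
    simpa using fun h => hy ((inner_self_eq_zero (𝕜 := ℝ)).mp h)
  have hwy : ⟪w, y⟫_ℝ = c := by
    rw [hw, real_inner_smul_left, div_mul_cancel₀ _ hyy]
  have hker : {z : Ed d | ⟪z, y⟫_ℝ = 0}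
      = (LinearMap.ker (innerSL ℝ y).toLinearMap : Set (Ed d)) := by
    ext z
    simp only [Set.mem_setOf_eq, SetLike.mem_coe, LinearMap.mem_ker, ContinuousLinearMap.coe_coe, innerSL_apply_apply]
    rw [real_inner_comm]
  have hker0 : (volume : Measure (Ed d)) {z | ⟪z, y⟫_ℝ = 0} = 0 := by
    rw [hker]
    apply Measure.addHaar_submodule
    intro h
    have : y ∈ LinearMap.ker (innerSL ℝ y).toLinearMap := h ▸ Submodule.mem_top
    rw [LinearMap.mem_ker] at this
    exact hyy (by simpa [real_inner_comm] using this)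
  have hpre : (fun z : Ed d => z + w) ⁻¹' {z | ⟪z, y⟫_ℝ = c} = {z | ⟪z, y⟫_ℝ = 0} := by
    ext z
    simp only [Set.mem_preimage, Set.mem_setOf_eq, inner_add_left, hwy]
    constructor <;> intro h <;> linarith
  calc (volume : Measure (Ed d)) {z | ⟪z, y⟫_ℝ = c}
      = volume ((fun z : Ed d => z + w) ⁻¹' {z | ⟪z, y⟫_ℝ = c}) :=
        (measure_preimage_add_right _ _ _).symm
    _ = 0 := by rw [hpre]; exact hker0

end Statement5Aux

open Statement5Aux

set_option maxHeartbeats 2000000 in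
/-- if `M₂(a) < ∞` then there is `C > 0` (depending only on `a`) with
`Â(ξ + 2πn) ≥ C|ξ|²` for every `ξ ∈ [−π,π)ᵈ` and every `n ∈ ℤᵈ`. -/
theorem statement5
    (d : ℕ) (hd : 1 ≤ d)
    (a : Ed d → ℝ)
    (ha_int : Integrable a (volume : Measure (Ed d)))
    (ha_nonneg : ∀ᵐ x ∂(volume : Measure (Ed d)), 0 ≤ a x)
    (ha_ne : ¬ (a =ᵐ[(volume : Measure (Ed d))] 0))
    (hM2 : Integrable (fun x => ‖x‖ ^ 2 * a x) (volume : Measure (Ed d))) :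
    ∃ C : ℝ, 0 < C ∧
      ∀ ξ : Ed d, (∀ i, ξ i ∈ Set.Ico (-π) π) → ∀ n : Fin d → ℤ,
        C * ‖ξ‖ ^ 2 ≤
          ∫ z, (1 - Real.cos ⟪z, ξ + toEd fun i => 2 * π * (n i : ℝ)⟫_ℝ) * a z := by
  classical
  have pi_pos := Real.pi_pos
  set μ : Measure (Ed d) := volume with hμdef
  set A : Ed d → ℝ := fun y => ∫ z, (1 - Real.cos ⟪z, y⟫_ℝ) * a z with hA
  have hmeas : AEStronglyMeasurable a μ := ha_int.aestronglyMeasurable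
  -- integrability of the integrand
  have hint : ∀ y : Ed d, Integrable (fun z => (1 - Real.cos ⟪z, y⟫_ℝ) * a z) μ := by
    intro y
    refine ha_int.bdd_mul (c := 2)
      ((continuous_const.sub (Real.continuous_cos.comp (cont_inner y)))).aestronglyMeasurable ?_
    exact Filter.Eventually.of_forall fun z => abs_one_sub_cos_le _
  have hptnn : ∀ y : Ed d, ∀ᵐ z ∂μ, 0 ≤ (1 - Real.cos ⟪z, y⟫_ℝ) * a z := by
    intro y
    filter_upwards [ha_nonneg] with z hz
    exact mul_nonneg (one_sub_cos_nonneg _) hz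
  have hAnn : ∀ y : Ed d, 0 ≤ A y := fun y => integral_nonneg_of_ae (hptnn y)
  -- continuity of A
  have hAcont : Continuous A := by
    rw [hA]
    refine continuous_of_dominated
      (F := fun y z => (1 - Real.cos ⟪z, y⟫_ℝ) * a z) (bound := fun z => 2 * |a z|)
      (fun y => (hint y).aestronglyMeasurable) ?_ (ha_int.abs.const_mul 2) ?_
    · intro y
      filter_upwards with z
      rw [norm_mul]
      have := abs_one_sub_cos_le (⟪z, y⟫_ℝ)
      have h2 : ‖a z‖ = |a z| := rfl
      nlinarith [abs_nonneg (a z), norm_nonneg (1 - Real.cos ⟪z, y⟫_ℝ)]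
    · filter_upwards with z
      exact (continuous_const.sub (Real.continuous_cos.comp (continuous_const.inner continuous_id))).mul
        continuous_const
  -- strict positivity away from 0
  have hApos : ∀ y : Ed d, y ≠ 0 → 0 < A y := by
    intro y hy
    rcases (hAnn y).lt_or_eq with h | h
    · exact h
    exfalso
    have h0 : (fun z => (1 - Real.cos ⟪z, y⟫_ℝ) * a z) =ᵐ[μ] 0 :=
      (integral_eq_zero_iff_of_nonneg_ae (hptnn y) (hint y)).mp h.symm
    set N : Set (Ed d) := ⋃ k : ℤ, {z | ⟪z, y⟫_ℝ = (k : ℝ) * (2 * π)} with hN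
    have hNnull : μ N = 0 :=
      measure_iUnion_null fun k => hyperplane_null hy _
    have hNae : ∀ᵐ z ∂μ, z ∉ N := by
      rw [← measure_eq_zero_iff_ae_notMem]; exact hNnull
    have : a =ᵐ[μ] 0 := by
      filter_upwards [h0, hNae] with z hz hzN
      simp only [Pi.zero_apply] at hz ⊢
      rcases mul_eq_zero.mp hz with h1 | h2
      · exfalso
        apply hzN
        have hcos : Real.cos ⟪z, y⟫_ℝ = 1 := by linarith
        rcases (Real.cos_eq_one_iff _).mp hcos with ⟨k, hk⟩
        exact Set.mem_iUnion.mpr ⟨k, hk.symm⟩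
      · exact h2
    exact ha_ne this
  -- total mass
  have hsupp : μ (Function.support a) ≠ 0 := by
    intro h
    apply ha_ne
    have : ∀ᵐ z ∂μ, z ∉ Function.support a := by
      rw [← measure_eq_zero_iff_ae_notMem]; exact h
    filter_upwards [this] with z hz
    simpa [Function.mem_support, not_not] using hz
  have hIpos : 0 < ∫ z, a z ∂μ := by
    rw [integral_pos_iff_support_of_nonneg_ae ha_nonneg ha_int]
    exact lt_of_le_of_ne zero_le (Ne.symm hsupp)
  set I : ℝ := ∫ z, a z ∂μ with hI
  -- choose a ball carrying positive mass
  have hball : ∃ R : ℕ, 0 < μ (Function.support a ∩ Metric.closedBall 0 (R : ℝ)) := by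
    by_contra h
    push_neg at h
    have h0 : ∀ R : ℕ, μ (Function.support a ∩ Metric.closedBall 0 (R : ℝ)) = 0 :=
      fun R => le_antisymm (h R) zero_le
    have : Function.support a ⊆ ⋃ R : ℕ, (Function.support a ∩ Metric.closedBall 0 (R : ℝ)) := by
      intro z hz
      rcases exists_nat_ge ‖z‖ with ⟨R, hR⟩
      exact Set.mem_iUnion.mpr ⟨R, hz, by simpa [Metric.mem_closedBall] using hR⟩
    exact hsupp (le_antisymm ((measure_mono this).trans
      (le_of_eq (measure_iUnion_null h0))) zero_le)
  obtain ⟨R₀, hR₀⟩ := hball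
  set Rr : ℝ := (R₀ : ℝ) + 2 with hRr
  have hRr2 : 2 ≤ Rr := le_add_of_nonneg_left (by positivity)
  have hRrpos : 0 < Rr := lt_of_lt_of_le two_pos hRr2
  set B : Set (Ed d) := Metric.closedBall (0 : Ed d) Rr with hB
  have hBmeas : MeasurableSet B := Metric.isClosed_closedBall.measurableSet
  have hμB : 0 < μ (Function.support a ∩ B) := by
    refine lt_of_lt_of_le hR₀ (measure_mono ?_)
    exact Set.inter_subset_inter_right _
      (Metric.closedBall_subset_closedBall (by rw [hRr]; linarith))
  -- the quadratic form
  set Q : Ed d → ℝ := fun u => ∫ z in B, ⟪z, u⟫_ℝ ^ 2 * a z ∂μ with hQ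
  have hbd : ∀ (u : Ed d) (c : ℝ), ‖u‖ ≤ c →
      ∀ᵐ z ∂(μ.restrict B), ‖(⟪z, u⟫_ℝ) ^ 2‖ ≤ Rr ^ 2 * c ^ 2 := by
    intro u c hc
    filter_upwards [ae_restrict_mem hBmeas] with z hz
    have h1 : |⟪z, u⟫_ℝ| ≤ ‖z‖ * ‖u‖ := abs_real_inner_le_norm z u
    have h2 : ‖z‖ ≤ Rr := by simpa [hB, Metric.mem_closedBall, dist_eq_norm] using hz
    have h3 : ‖(⟪z, u⟫_ℝ) ^ 2‖ = |⟪z, u⟫_ℝ| ^ 2 := by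
      rw [Real.norm_eq_abs, _root_.abs_pow]
    rw [h3]
    have h4 : (0:ℝ) ≤ ‖u‖ := norm_nonneg u
    have h5 : (0:ℝ) ≤ ‖z‖ := norm_nonneg z
    have h6 : ‖z‖ * ‖u‖ ≤ Rr * c := mul_le_mul h2 hc h4 (le_trans h5 h2)
    nlinarith [abs_nonneg (⟪z, u⟫_ℝ)]
  have hQint : ∀ u : Ed d, Integrable (fun z => ⟪z, u⟫_ℝ ^ 2 * a z) (μ.restrict B) := by
    intro u
    exact (ha_int.restrict).bdd_mul (((cont_inner u).pow 2).aestronglyMeasurable)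
      (hbd u ‖u‖ le_rfl)
  have hQcont : Continuous Q := by
    rw [continuous_iff_continuousAt]
    intro u₀
    rw [hQ]
    refine continuousAt_of_dominated (bound := fun z => Rr ^ 2 * (‖u₀‖ + 1) ^ 2 * |a z|)
      ?_ ?_ ?_ ?_
    · filter_upwards with u
      exact (hQint u).aestronglyMeasurable
    · filter_upwards [Metric.ball_mem_nhds u₀ one_pos] with u hu
      have hun : ‖u‖ ≤ ‖u₀‖ + 1 := by
        have := mem_ball_iff_norm.mp hu
        have := norm_sub_norm_le u u₀
        linarith
      filter_upwards [hbd u (‖u₀‖ + 1) hun] with z hz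
      rw [norm_mul]
      have : ‖a z‖ = |a z| := rfl
      nlinarith [abs_nonneg (a z), norm_nonneg ((⟪z, u⟫_ℝ) ^ 2)]
    · exact ((ha_int.restrict).abs.const_mul _)
    · filter_upwards with z
      exact (((continuous_const.inner continuous_id).pow 2).mul continuous_const).continuousAt
  have hQpos : ∀ u : Ed d, u ≠ 0 → 0 < Q u := by
    intro u hu
    have hnn : ∀ᵐ z ∂(μ.restrict B), 0 ≤ ⟪z, u⟫_ℝ ^ 2 * a z := by
      filter_upwards [ae_restrict_of_ae ha_nonneg] with z hz
      positivity
    rcases (integral_nonneg_of_ae hnn).lt_or_eq with h | h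
    · exact h
    exfalso
    have h0 : (fun z => ⟪z, u⟫_ℝ ^ 2 * a z) =ᵐ[μ.restrict B] 0 :=
      (integral_eq_zero_iff_of_nonneg_ae hnn (hQint u)).mp h.symm
    have hplane : (μ.restrict B) {z | ⟪z, u⟫_ℝ = 0} = 0 :=
      le_antisymm (le_trans (Measure.restrict_le_self _) (le_of_eq (hyperplane_null hu 0)))
        zero_le
    have hplane' : ∀ᵐ z ∂(μ.restrict B), ⟪z, u⟫_ℝ ≠ 0 := by
      have h' := measure_eq_zero_iff_ae_notMem.mp hplane
      filter_upwards [h'] with z hz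
      simpa using hz
    have hae0 : ∀ᵐ z ∂(μ.restrict B), a z = 0 := by
      filter_upwards [h0, hplane'] with z hz hz'
      simp only [Pi.zero_apply] at hz
      rcases mul_eq_zero.mp hz with h1 | h2
      · exact absurd (pow_eq_zero_iff (n := 2) (by norm_num) |>.mp h1) hz'
      · exact h2
    have : (μ.restrict B) (Function.support a) = 0 := by
      rw [measure_eq_zero_iff_ae_notMem]
      filter_upwards [hae0] with z hz
      simp [Function.mem_support, hz]
    rw [Measure.restrict_apply' hBmeas] at this
    exact absurd this hμB.ne'
  -- minimum of Q on the unit sphere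
  have hS1ne : (Metric.sphere (0 : Ed d) 1).Nonempty := by
    refine ⟨EuclideanSpace.single ⟨0, hd⟩ (1:ℝ), ?_⟩
    simp [EuclideanSpace.norm_single]
  obtain ⟨u₀, hu₀S, hu₀min⟩ :=
    (isCompact_sphere (0 : Ed d) 1).exists_isMinOn hS1ne hQcont.continuousOn
  have hu₀n : ‖u₀‖ = 1 := by simpa using mem_sphere_zero_iff_norm.mp hu₀S
  set q : ℝ := Q u₀ with hq
  have hqpos : 0 < q := hQpos u₀ (by intro h; rw [h] at hu₀n; simp at hu₀n)
  -- small-`y` bound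
  set δ : ℝ := π / Rr with hδ
  have hδpos : 0 < δ := div_pos pi_pos hRrpos
  have hδπ : δ < π := by
    rw [hδ, div_lt_iff₀ hRrpos]
    nlinarith
  have hsmall : ∀ y : Ed d, ‖y‖ ≤ δ → (2 / π ^ 2 * q) * ‖y‖ ^ 2 ≤ A y := by
    intro y hy
    rcases eq_or_ne y 0 with rfl | hy0
    · simpa using hAnn 0
    set u : Ed d := (‖y‖⁻¹ : ℝ) • y with hu
    have hny : 0 < ‖y‖ := norm_pos_iff.mpr hy0
    have huS : ‖u‖ = 1 := norm_smul_inv_norm (𝕜 := ℝ) hy0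
    have hyu : ∀ z : Ed d, ⟪z, y⟫_ℝ = ‖y‖ * ⟪z, u⟫_ℝ := by
      intro z
      rw [hu, real_inner_smul_right, ← mul_assoc, mul_inv_cancel₀ hny.ne', one_mul]
    have key : ∀ᵐ z ∂(μ.restrict B),
        (2 / π ^ 2 * ‖y‖ ^ 2) * (⟪z, u⟫_ℝ ^ 2 * a z)
          ≤ (1 - Real.cos ⟪z, y⟫_ℝ) * a z := by
      filter_upwards [ae_restrict_mem hBmeas, ae_restrict_of_ae ha_nonneg] with z hzB hza
      have hzn : ‖z‖ ≤ Rr := by simpa [hB, Metric.mem_closedBall, dist_eq_norm] using hzB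
      have habs : |⟪z, y⟫_ℝ| ≤ π := by
        have h1 := abs_real_inner_le_norm z y
        have h2 : ‖z‖ * ‖y‖ ≤ Rr * δ := by
          apply mul_le_mul hzn hy (norm_nonneg y) hRrpos.le
        have h3 : Rr * δ = π := by rw [hδ]; field_simp
        linarith
      have h1 : 2 / π ^ 2 * ⟪z, y⟫_ℝ ^ 2 ≤ 1 - Real.cos ⟪z, y⟫_ℝ := quad_le_one_sub_cos habs
      calc (2 / π ^ 2 * ‖y‖ ^ 2) * (⟪z, u⟫_ℝ ^ 2 * a z)
          = (2 / π ^ 2 * ⟪z, y⟫_ℝ ^ 2) * a z := by rw [hyu z]; ring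
        _ ≤ (1 - Real.cos ⟪z, y⟫_ℝ) * a z := mul_le_mul_of_nonneg_right h1 hza
    have i1 : Integrable (fun z => (2 / π ^ 2 * ‖y‖ ^ 2) * (⟪z, u⟫_ℝ ^ 2 * a z))
        (μ.restrict B) := (hQint u).const_mul _
    have i2 : Integrable (fun z => (1 - Real.cos ⟪z, y⟫_ℝ) * a z) (μ.restrict B) :=
      (hint y).restrict
    have step := integral_mono_ae i1 i2 key
    rw [integral_const_mul] at step
    have step2 : (∫ z in B, (1 - Real.cos ⟪z, y⟫_ℝ) * a z ∂μ) ≤ A y :=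
      setIntegral_le_integral (hint y) (hptnn y)
    have hqu : q ≤ Q u := hu₀min (mem_sphere_zero_iff_norm.mpr huS)
    have step' : (2 / π ^ 2 * ‖y‖ ^ 2) * Q u
        ≤ ∫ z in B, (1 - Real.cos ⟪z, y⟫_ℝ) * a z ∂μ := step
    have hfac : (2 / π ^ 2 * q) * ‖y‖ ^ 2 ≤ (2 / π ^ 2 * ‖y‖ ^ 2) * Q u := by
      have hnn : (0:ℝ) ≤ 2 / π ^ 2 * ‖y‖ ^ 2 := by positivity
      nlinarith [sq_nonneg ‖y‖]
    calc (2 / π ^ 2 * q) * ‖y‖ ^ 2 ≤ (2 / π ^ 2 * ‖y‖ ^ 2) * Q u := hfac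
      _ ≤ ∫ z in B, (1 - Real.cos ⟪z, y⟫_ℝ) * a z ∂μ := step'
      _ ≤ A y := step2
  -- far-field bound via Riemann–Lebesgue
  set φ : Ed d → ℝ := fun y => ∫ z, Real.cos ⟪z, y⟫_ℝ * a z ∂μ with hφ
  have hcosint : ∀ y : Ed d, Integrable (fun z => Real.cos ⟪z, y⟫_ℝ * a z) μ := by
    intro y
    refine ha_int.bdd_mul (c := 1)
      ((Real.continuous_cos.comp (cont_inner y)).aestronglyMeasurable) ?_
    exact Filter.Eventually.of_forall fun z => by
      rw [Real.norm_eq_abs]; exact Real.abs_cos_le_one _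
  have hAeq : ∀ y : Ed d, A y = I - φ y := by
    intro y
    have h : (∫ z, (1 - Real.cos ⟪z, y⟫_ℝ) * a z ∂μ)
        = (∫ z, a z ∂μ) - ∫ z, Real.cos ⟪z, y⟫_ℝ * a z ∂μ := by
      rw [← integral_sub ha_int (hcosint y)]
      congr 1
      funext z
      ring
    exact h
  have hRL : Filter.Tendsto φ (Filter.cocompact (Ed d)) (nhds 0) := by
    have h1 : Filter.Tendsto (fun w : Ed d => ∫ v, 𝐞 (-⟪v, w⟫_ℝ) • ((a v : ℂ)))
        (Filter.cocompact (Ed d)) (nhds 0) :=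
      tendsto_integral_exp_inner_smul_cocompact (fun v => (a v : ℂ))
    have hc : ((- (2 * π)⁻¹ : ℝ)) ≠ 0 := by
      simp only [ne_eq, neg_eq_zero, inv_eq_zero]
      positivity
    have h2 : Filter.Tendsto (fun y : Ed d => (- (2 * π)⁻¹ : ℝ) • y)
        (Filter.cocompact (Ed d)) (Filter.cocompact (Ed d)) :=
      le_of_eq (Homeomorph.smulOfNeZero _ hc).map_cocompact
    have h3 := (Complex.continuous_re.tendsto 0).comp (h1.comp h2)
    simp only [Complex.zero_re] at h3
    have heq : φ = fun y : Ed d =>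
        (∫ v, 𝐞 (-⟪v, (- (2 * π)⁻¹ : ℝ) • y⟫_ℝ) • ((a v : ℂ))).re := by
      funext y
      have hintc : Integrable
          (fun v : Ed d => 𝐞 (-⟪v, (- (2 * π)⁻¹ : ℝ) • y⟫_ℝ) • ((a v : ℂ))) volume :=
        (Real.fourierIntegral_convergent_iff _).mpr ha_int.ofReal
      have hre := Complex.reCLM.integral_comp_comm hintc
      simp only [Complex.reCLM_apply] at hre
      rw [← hre]
      show (∫ z, Real.cos ⟪z, y⟫_ℝ * a z ∂μ) = _
      congr 1
      funext v
      have harg : -⟪v, (- (2 * π)⁻¹ : ℝ) • y⟫_ℝ = (2 * π)⁻¹ * ⟪v, y⟫_ℝ := by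
        rw [real_inner_smul_right]; ring
      rw [harg, Circle.smul_def, Real.fourierChar_apply]
      have h2π : 2 * π * ((2 * π)⁻¹ * ⟪v, y⟫_ℝ) = ⟪v, y⟫_ℝ := by
        field_simp
      rw [h2π, smul_eq_mul, Complex.mul_re, Complex.exp_ofReal_mul_I_re]
      simp
    exact Filter.Tendsto.congr (fun x => (congrFun heq x).symm) h3
  have hfar : ∃ m : ℝ, 0 < m ∧ ∀ y : Ed d, δ ≤ ‖y‖ → m ≤ A y := by
    have hev : ∀ᶠ y in Filter.cocompact (Ed d), |φ y| < I / 2 := by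
      have := Metric.tendsto_nhds.mp hRL (I / 2) (by positivity)
      simpa [Real.dist_eq] using this
    obtain ⟨K, hK, hKsub⟩ := Filter.hasBasis_cocompact.eventually_iff.mp hev
    set S : Set (Ed d) := K ∩ {y | δ ≤ ‖y‖} with hS
    have hScomp : IsCompact S := hK.inter_right (isClosed_le continuous_const continuous_norm)
    have hout : ∀ y : Ed d, y ∉ K → I / 2 ≤ A y := by
      intro y hyK
      have h1 : |φ y| < I / 2 := hKsub (by simpa using hyK)
      have h2 := (abs_lt.mp h1).2
      rw [hAeq y]
      linarith
    rcases S.eq_empty_or_nonempty with hSe | hSne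
    · refine ⟨I / 2, by positivity, ?_⟩
      intro y hy
      by_cases hyK : y ∈ K
      · exfalso
        have hyS : y ∈ S := ⟨hyK, hy⟩
        rw [hSe] at hyS
        exact Set.notMem_empty y hyS
      · exact hout y hyK
    · obtain ⟨y₀, hy₀S, hmin⟩ := hScomp.exists_isMinOn hSne hAcont.continuousOn
      have hy₀pos : 0 < A y₀ := by
        apply hApos
        intro h
        have := hy₀S.2
        rw [h] at this
        simp only [Set.mem_setOf_eq, norm_zero] at this
        linarith
      refine ⟨min (I / 2) (A y₀), lt_min (by positivity) hy₀pos, ?_⟩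
      intro y hy
      by_cases hyK : y ∈ K
      · exact le_trans (min_le_right _ _) (hmin ⟨hyK, hy⟩)
      · exact le_trans (min_le_left _ _) (hout y hyK)
  obtain ⟨m, hmpos, hfar⟩ := hfar
  -- combine
  have hdpos : (0:ℝ) < d := by exact_mod_cast Nat.lt_of_lt_of_le Nat.zero_lt_one hd
  set c₁ : ℝ := 2 / π ^ 2 * q with hc₁def
  have hc₁ : 0 < c₁ := by positivity
  set c₂ : ℝ := m / (d * π ^ 2) with hc₂def
  have hc₂ : 0 < c₂ := by positivity
  refine ⟨min c₁ c₂, lt_min hc₁ hc₂, ?_⟩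
  intro ξ hξ n
  set y : Ed d := ξ + toEd (fun i => 2 * π * (n i : ℝ)) with hy
  have hgoal : A y = ∫ z, (1 - Real.cos ⟪z, y⟫_ℝ) * a z := rfl
  rw [← hgoal]
  have hcoord : ∀ i, |y i| ≤ ‖y‖ := by
    intro i
    rw [EuclideanSpace.norm_eq]
    rw [show |y i| = Real.sqrt (|y i| ^ 2) by rw [Real.sqrt_sq (abs_nonneg _)]]
    apply Real.sqrt_le_sqrt
    rw [_root_.sq_abs]
    have : (y i) ^ 2 = ‖y i‖ ^ 2 := by rw [Real.norm_eq_abs, _root_.sq_abs]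
    rw [this]
    exact Finset.single_le_sum (fun j _ => sq_nonneg ‖y j‖) (Finset.mem_univ i)
  have hξbound : ‖ξ‖ ^ 2 ≤ d * π ^ 2 := by
    rw [EuclideanSpace.norm_eq, Real.sq_sqrt (by positivity)]
    calc ∑ i, ‖ξ i‖ ^ 2 ≤ ∑ _i : Fin d, π ^ 2 := by
          apply Finset.sum_le_sum
          intro i _
          have h := hξ i
          rw [Real.norm_eq_abs, _root_.sq_abs]
          nlinarith [h.1, h.2]
      _ = d * π ^ 2 := by rw [Finset.sum_const, Finset.card_univ, Fintype.card_fin,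
            nsmul_eq_mul]
  by_cases hcase : ‖y‖ ≤ δ
  · have hyξ : y = ξ := by
      have hn : ∀ i, n i = 0 := by
        intro i
        have h1 : |y i| < π := lt_of_le_of_lt (le_trans (hcoord i) hcase) hδπ
        have h2 : y i = ξ i + 2 * π * (n i : ℝ) := by simp [hy, toEd]
        have h3 := hξ i
        have h4 : |(n i : ℝ)| < 1 := by
          rw [abs_lt] at h1 ⊢
          rw [h2] at h1
          obtain ⟨ha1, ha2⟩ := h1
          obtain ⟨hb1, hb2⟩ := h3
          constructor <;> nlinarith
        have h5 : |n i| < 1 := by exact_mod_cast (by push_cast; exact h4 : |((n i : ℤ) : ℝ)| < 1)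
        exact Int.abs_lt_one_iff.mp h5
      ext i
      simp [hy, toEd, hn i]
    rw [hyξ]
    calc min c₁ c₂ * ‖ξ‖ ^ 2 ≤ c₁ * ‖ξ‖ ^ 2 :=
          mul_le_mul_of_nonneg_right (min_le_left _ _) (sq_nonneg _)
      _ ≤ A ξ := hsmall ξ (hyξ ▸ hcase)
  · push_neg at hcase
    have h1 : m ≤ A y := hfar y hcase.le
    calc min c₁ c₂ * ‖ξ‖ ^ 2 ≤ c₂ * (d * π ^ 2) := by
          apply mul_le_mul (min_le_right _ _) hξbound (sq_nonneg _) hc₂.le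
      _ = m := by rw [hc₂def]; field_simp
      _ ≤ A y := h1

end
end

section
/- For ξ ∈ ℝᵈ let 𝔸(ξ) be the bounded operator on L²(Ω;ℂ) given by (𝔸(ξ)u)(x) = ∫_{ℝᵈ} a(x−y) μ(x,y) (u(x) − e^{−i⟨ξ, x−y⟩} u(y)) dy for x ∈ Ω, where u is extended ℤᵈ-periodically. If M₁(a) < ∞, then for all ξ, η ∈ Ω̃ := [−π,π)ᵈ one has the operator-norm bound ‖𝔸(ξ) − 𝔸(η)‖_{B(L²(Ω))} ≤ μ₊ M₁(a) |ξ − η|. -/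
open MeasureTheory Complex
open scoped Real InnerProductSpace ENNReal

noncomputable section

/-- The periodicity cell `Ω = [0,1)ᵈ`. -/
def cellΩ (d : ℕ) : Set (Ed d) := {x | ∀ i, x i ∈ Set.Ico (0 : ℝ) 1}

/-- Lebesgue measure restricted to `Ω`. -/
def μΩ (d : ℕ) : Measure (Ed d) := volume.restrict (cellΩ d)

/-- The `ℤᵈ`-periodic extension of a function defined (a.e.) on `Ω`. -/
def perExt {d : ℕ} (f : Ed d → ℂ) : Ed d → ℂ := fun x => f (toEd fun i => Int.fract (x i))

namespace Stmt8

variable {d : ℕ}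

lemma norm_exp_neg_I_mul (r : ℝ) : ‖Complex.exp (-Complex.I * r)‖ = 1 := by
  rw [show -Complex.I * (r : ℂ) = ((-r : ℝ) : ℂ) * Complex.I by push_cast; ring]
  exact Complex.norm_exp_ofReal_mul_I _

lemma norm_exp_I_mul (r : ℝ) : ‖Complex.exp (Complex.I * r)‖ = 1 := by
  rw [show Complex.I * (r : ℂ) = ((r : ℝ) : ℂ) * Complex.I by push_cast; ring]
  exact Complex.norm_exp_ofReal_mul_I _

lemma exp_lip (s t : ℝ) :
    ‖Complex.exp (-Complex.I * s) - Complex.exp (-Complex.I * t)‖ ≤ |s - t| := by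
  have hder : ∀ u : ℝ, HasDerivAt (fun r : ℝ => Complex.exp (-Complex.I * r))
      (Complex.exp (-Complex.I * u) * (-Complex.I)) u := by
    intro u
    have h1 : HasDerivAt (fun r : ℝ => (r : ℂ)) 1 u := Complex.ofRealCLM.hasDerivAt
    have h2 : HasDerivAt (fun r : ℝ => -Complex.I * (r : ℂ)) (-Complex.I) u := by
      simpa using h1.const_mul (-Complex.I)
    simpa [mul_comm] using h2.cexp
  have key := Convex.norm_image_sub_le_of_norm_hasDerivWithin_le
    (f := fun r : ℝ => Complex.exp (-Complex.I * r))
    (f' := fun u => Complex.exp (-Complex.I * u) * (-Complex.I)) (C := 1)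
    (fun u _ => (hder u).hasDerivWithinAt)
    (fun u _ => by
      rw [norm_mul, norm_exp_neg_I_mul, norm_neg, Complex.norm_I, one_mul])
    convex_univ (Set.mem_univ t) (Set.mem_univ s)
  simpa [Real.norm_eq_abs] using key


/-! ### The lattice `ℤᵈ` in `ℝᵈ` -/

/-- The lattice vector attached to `n : ℤᵈ`. -/
def latVec {d : ℕ} (n : Fin d → ℤ) : Ed d := toEd fun i => (n i : ℝ)

@[simp] lemma latVec_apply (n : Fin d → ℤ) (i : Fin d) : latVec n i = n i := by rfl

/-- The standard basis of `ℝᵈ` as a plain basis. -/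
def bEd (d : ℕ) : Module.Basis (Fin d) ℝ (Ed d) := (EuclideanSpace.basisFun (Fin d) ℝ).toBasis

lemma bEd_repr (x : Ed d) (i : Fin d) : (bEd d).repr x i = x i := by
  rw [bEd, OrthonormalBasis.coe_toBasis_repr_apply, EuclideanSpace.basisFun_repr]

/-- The lattice `ℤᵈ ⊆ ℝᵈ`. -/
def lat (d : ℕ) : Submodule ℤ (Ed d) := Submodule.span ℤ (Set.range ⇑(bEd d))

lemma latVec_mem (n : Fin d → ℤ) : latVec n ∈ lat d := by
  rw [lat, Module.Basis.mem_span_iff_repr_mem]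
  intro i
  exact ⟨n i, by simp [bEd_repr]⟩

lemma cellΩ_eq_fundamentalDomain : cellΩ d = ZSpan.fundamentalDomain (bEd d) := by
  ext x
  simp [cellΩ, ZSpan.fundamentalDomain, bEd_repr]

lemma measurableSet_cellΩ : MeasurableSet (cellΩ d) := by
  rw [cellΩ_eq_fundamentalDomain]
  exact ZSpan.fundamentalDomain_measurableSet (bEd d)

/-- The obvious equivalence between `ℤᵈ` and the lattice. -/
def latEquiv (d : ℕ) : (Fin d → ℤ) ≃ lat d where
  toFun n := ⟨latVec n, latVec_mem n⟩
  invFun l := fun i => ⌊(l : Ed d) i⌋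
  left_inv n := by funext i; simp
  right_inv l := by
    have h := (Module.Basis.mem_span_iff_repr_mem ℤ (bEd d) (l : Ed d)).1 l.2
    apply Subtype.ext
    refine PiLp.ext fun i => ?_
    obtain ⟨z, hz⟩ := h i
    rw [bEd_repr] at hz
    have : ((z : ℝ)) = (l : Ed d) i := hz
    simp [latVec, toEd, ← this, Int.floor_intCast]

instance : Countable (lat d) := Countable.of_equiv _ (latEquiv d)

instance : MeasurableVAdd (lat d) (Ed d) := by
  constructor
  · intro x
    exact (measurable_subtype_coe.add_const x)

instance : VAddInvariantMeasure (lat d) (Ed d) volume :=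
  ⟨fun g s _ => measure_preimage_add volume (g : Ed d) s⟩

/-- Unfolding of a Lebesgue integral over `ℝᵈ` into integrals over translated cells. -/
lemma unfold (f : Ed d → ℝ≥0∞) :
    ∫⁻ x, f x = ∑' n : Fin d → ℤ, ∫⁻ x in cellΩ d, f (x + latVec n) := by
  have hfd := ZSpan.isAddFundamentalDomain (bEd d) (volume : Measure (Ed d))
  haveI : Countable (Submodule.span ℤ (Set.range ⇑(bEd d))) := (inferInstance : Countable (lat d))
  haveI : MeasurableVAdd (Submodule.span ℤ (Set.range ⇑(bEd d))) (Ed d) :=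
    (inferInstance : MeasurableVAdd (lat d) (Ed d))
  haveI : VAddInvariantMeasure (Submodule.span ℤ (Set.range ⇑(bEd d))) (Ed d) volume :=
    (inferInstance : VAddInvariantMeasure (lat d) (Ed d) volume)
  have h := hfd.lintegral_eq_tsum'' f
  rw [h]
  refine (((latEquiv d).tsum_eq
    (fun g : lat d => ∫⁻ x in ZSpan.fundamentalDomain (bEd d), f (g +ᵥ x))).symm).trans
    (tsum_congr fun n => ?_)
  rw [← cellΩ_eq_fundamentalDomain]
  refine lintegral_congr fun x => ?_
  congr 1
  show (latVec n) + x = x + latVec n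
  exact add_comm _ _

/-! ### Measure-theoretic helpers -/

lemma lint_sub_left (k : Ed d → ℝ≥0∞) (x : Ed d) :
    ∫⁻ y, k (x - y) = ∫⁻ y, k y :=
  (Measure.measurePreserving_sub_left volume x).lintegral_comp_emb
    (MeasurableEquiv.subLeft x).measurableEmbedding k

lemma qmp_sub_left (x : Ed d) :
    Measure.QuasiMeasurePreserving (fun y : Ed d => x - y)
      (volume : Measure (Ed d)) (volume : Measure (Ed d)) :=
  (Measure.measurePreserving_sub_left volume x).quasiMeasurePreserving

/-- The fractional-part ("folding") map `ℝᵈ → Ω`. -/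
def fractMap (d : ℕ) : Ed d → Ed d := fun x => toEd fun i => Int.fract (x i)

lemma perExt_eq_comp (f : Ed d → ℂ) : perExt f = f ∘ fractMap d := rfl

lemma measurable_fractMap : Measurable (fractMap d) := by
  refine (WithLp.measurable_toLp 2 (Fin d → ℝ)).comp ?_
  apply measurable_pi_lambda
  intro i
  exact measurable_fract.comp ((measurable_pi_apply i).comp (WithLp.measurable_ofLp 2 _))

lemma fractMap_mem_cellΩ (x : Ed d) : fractMap d x ∈ cellΩ d := by
  intro i
  exact ⟨Int.fract_nonneg (x i), Int.fract_lt_one (x i)⟩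

lemma fractMap_add_latVec (x : Ed d) (n : Fin d → ℤ) :
    fractMap d (x + latVec n) = fractMap d x := by
  refine PiLp.ext fun i => ?_
  show Int.fract ((x + latVec n) i) = Int.fract (x i)
  have : (x + latVec n) i = x i + (n i : ℝ) := rfl
  rw [this, Int.fract_add_intCast]

lemma fractMap_eq_self {x : Ed d} (hx : x ∈ cellΩ d) : fractMap d x = x := by
  refine PiLp.ext fun i => ?_
  exact Int.fract_eq_self.2 ⟨(hx i).1, (hx i).2⟩

lemma qmp_fractMap : Measure.QuasiMeasurePreserving (fractMap d)
    (volume : Measure (Ed d)) (μΩ d) := by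
  refine ⟨measurable_fractMap, ?_⟩
  refine Measure.AbsolutelyContinuous.mk fun s hs h0 => ?_
  rw [Measure.map_apply measurable_fractMap hs]
  rw [μΩ, Measure.restrict_apply hs] at h0
  have hsub : fractMap d ⁻¹' s ⊆ ⋃ n : Fin d → ℤ, (fun y => y + latVec n) ⁻¹' (s ∩ cellΩ d) := by
    intro x hx
    refine Set.mem_iUnion.2 ⟨fun i => -⌊x i⌋, ?_⟩
    have hxe : x + latVec (fun i => -⌊x i⌋) = fractMap d x := by
      refine PiLp.ext fun i => ?_
      show x i + ((-⌊x i⌋ : ℤ) : ℝ) = Int.fract (x i)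
      rw [Int.fract]
      push_cast
      ring
    show x + latVec (fun i => -⌊x i⌋) ∈ s ∩ cellΩ d
    rw [hxe]
    exact ⟨hx, fractMap_mem_cellΩ x⟩
  refine measure_mono_null hsub (measure_iUnion_null fun n => ?_)
  have : volume ((fun y : Ed d => y + latVec n) ⁻¹' (s ∩ cellΩ d)) =
      volume (s ∩ cellΩ d) :=
    measure_preimage_add_right volume (latVec n) _
  rw [this, h0]

lemma perExt_aesm {f : Ed d → ℂ} (hf : AEStronglyMeasurable f (μΩ d)) :
    AEStronglyMeasurable (perExt f) (volume : Measure (Ed d)) := by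
  rw [perExt_eq_comp]
  exact hf.comp_quasiMeasurePreserving qmp_fractMap

lemma perExt_periodic (f : Ed d → ℂ) (x : Ed d) (n : Fin d → ℤ) :
    perExt f (x + latVec n) = perExt f x := by
  rw [perExt_eq_comp]
  show f (fractMap d (x + latVec n)) = f (fractMap d x)
  rw [fractMap_add_latVec]

lemma perExt_eq_on_cell (f : Ed d → ℂ) {x : Ed d} (hx : x ∈ cellΩ d) :
    perExt f x = f x := by
  rw [perExt_eq_comp]
  show f (fractMap d x) = f x
  rw [fractMap_eq_self hx]

/-- A.e.-measurability of the inner integral of an a.e.-measurable function on a product. -/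
lemma aemeasurable_lintegral_right {α β : Type*} [MeasurableSpace α] [MeasurableSpace β]
    {μ : Measure α} {ν : Measure β} [SFinite ν] {f : α × β → ℝ≥0∞}
    (hf : AEMeasurable f (μ.prod ν)) :
    AEMeasurable (fun x => ∫⁻ y, f (x, y) ∂ν) μ := by
  refine (Measurable.lintegral_prod_right' (ν := ν) (f := hf.mk f) hf.measurable_mk).aemeasurable.congr ?_
  filter_upwards [Measure.ae_ae_of_ae_prod hf.ae_eq_mk] with x hx
  exact (lintegral_congr_ae hx).symm

/-! ### The Schur-type bound -/

instance : SigmaFinite (μΩ d) := by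
  unfold μΩ
  infer_instance

lemma muOmega_le_volume : μΩ d ≤ (volume : Measure (Ed d)) := Measure.restrict_le_self

lemma qmp_sub_prod (n : Fin d → ℤ) :
    Measure.QuasiMeasurePreserving (fun p : Ed d × Ed d => p.1 - p.2 - latVec n)
      ((μΩ d).prod (μΩ d)) (volume : Measure (Ed d)) := by
  have h1 : Measure.QuasiMeasurePreserving (fun p : Ed d × Ed d => p.1 - p.2)
      ((volume : Measure (Ed d)).prod (volume : Measure (Ed d))) (volume : Measure (Ed d)) :=
    quasiMeasurePreserving_sub volume volume
  have h1' : Measure.QuasiMeasurePreserving (fun p : Ed d × Ed d => p.1 - p.2)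
      ((μΩ d).prod (μΩ d)) (volume : Measure (Ed d)) := by
    refine ⟨h1.measurable, ?_⟩
    refine Measure.AbsolutelyContinuous.trans ?_ h1.absolutelyContinuous
    refine Measure.absolutelyContinuous_of_le (Measure.map_mono ?_ h1.measurable)
    rw [μΩ, Measure.prod_restrict]
    exact Measure.restrict_le_self
  have h2 : Measure.QuasiMeasurePreserving (fun z : Ed d => z - latVec n)
      (volume : Measure (Ed d)) (volume : Measure (Ed d)) :=
    (measurePreserving_sub_right volume (latVec n)).quasiMeasurePreserving
  exact h2.comp h1'

lemma qmp_swap_sub_prod (n : Fin d → ℤ) :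
    Measure.QuasiMeasurePreserving (fun p : Ed d × Ed d => p.2 - p.1 - latVec n)
      ((μΩ d).prod (μΩ d)) (volume : Measure (Ed d)) := by
  have h1 := qmp_sub_prod (d := d) n
  have hsw : MeasurePreserving (Prod.swap : Ed d × Ed d → Ed d × Ed d)
      ((μΩ d).prod (μΩ d)) ((μΩ d).prod (μΩ d)) := Measure.measurePreserving_swap
  exact h1.comp hsw.quasiMeasurePreserving

lemma qmp_snd' : Measure.QuasiMeasurePreserving (Prod.snd : Ed d × Ed d → Ed d)
    ((μΩ d).prod (μΩ d)) (volume : Measure (Ed d)) :=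
  (Measure.quasiMeasurePreserving_snd).mono Measure.AbsolutelyContinuous.rfl
    (Measure.restrict_le_self.absolutelyContinuous)

lemma latVec_neg (n : Fin d → ℤ) : latVec (-n) = -latVec n := by
  refine PiLp.ext fun i => ?_
  show ((-n i : ℤ) : ℝ) = -((n i : ℤ) : ℝ)
  push_cast
  ring

/-- Schur-type estimate for the periodized convolution operator. -/
lemma schur (k : Ed d → ℝ≥0∞) (hk : AEMeasurable k (volume : Measure (Ed d)))
    (hK : ∫⁻ z, k z ≠ ∞)
    (g : Ed d → ℝ≥0∞) (hg : AEMeasurable g (volume : Measure (Ed d)))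
    (hgfin : ∀ x, g x ≠ ∞)
    (hg_per : ∀ (x : Ed d) (n : Fin d → ℤ), g (x + latVec n) = g x) :
    ∫⁻ x, (∫⁻ y, k (x - y) * g y) ^ (2 : ℝ) ∂(μΩ d)
      ≤ (∫⁻ z, k z) ^ (2 : ℝ) * ∫⁻ x, g x ^ (2 : ℝ) ∂(μΩ d) := by
  set K := ∫⁻ z, k z with hKdef
  have hkx : ∀ x : Ed d, AEMeasurable (fun y => k (x - y)) (volume : Measure (Ed d)) :=
    fun x => hk.comp_quasiMeasurePreserving (qmp_sub_left x)
  set G : Ed d → ℝ≥0∞ := fun y => g y ^ (2 : ℝ) with hGdef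
  have hGfin : ∀ y, G y ≠ ∞ := fun y => ENNReal.rpow_ne_top_of_nonneg (by norm_num) (hgfin y)
  have hG : AEMeasurable G (volume : Measure (Ed d)) := hg.pow_const _
  -- Step A : pointwise Cauchy-Schwarz
  have stepA : ∀ x : Ed d, (∫⁻ y, k (x - y) * g y) ^ (2 : ℝ)
      ≤ K * ∫⁻ y, k (x - y) * G y := by
    intro x
    have hconj : Real.HolderConjugate 2 2 := by
      exact Real.HolderConjugate.two_two
    have hsq : ∀ z : ℝ≥0∞, (z ^ (1/2 : ℝ)) ^ (2 : ℝ) = z := by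
      intro z
      rw [← ENNReal.rpow_mul]
      norm_num
    have h := ENNReal.lintegral_mul_le_Lp_mul_Lq (volume : Measure (Ed d)) hconj
      (f := fun y => k (x - y) ^ (1/2 : ℝ)) (g := fun y => k (x - y) ^ (1/2 : ℝ) * g y)
      ((hkx x).pow_const _) (((hkx x).pow_const _).mul hg)
    have hint : ∀ y : Ed d, (fun y => k (x - y) ^ (1/2 : ℝ)) y *
        (fun y => k (x - y) ^ (1/2 : ℝ) * g y) y = k (x - y) * g y := by
      intro y
      show k (x - y) ^ (1/2 : ℝ) * (k (x - y) ^ (1/2 : ℝ) * g y) = _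
      rw [← mul_assoc, ← ENNReal.rpow_add_of_nonneg _ _ (by norm_num) (by norm_num)]
      norm_num
    have h1 : ∫⁻ y, k (x - y) * g y
        ≤ (∫⁻ y, k (x - y)) ^ (1/2 : ℝ) * (∫⁻ y, k (x - y) * G y) ^ (1/2 : ℝ) := by
      calc ∫⁻ y, k (x - y) * g y
          = ∫⁻ y, (fun y => k (x - y) ^ (1/2 : ℝ)) y *
              (fun y => k (x - y) ^ (1/2 : ℝ) * g y) y := by
            exact (lintegral_congr hint).symm
        _ ≤ (∫⁻ y, (k (x - y) ^ (1/2 : ℝ)) ^ (2:ℝ)) ^ (1 / (2:ℝ)) *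
              (∫⁻ y, (k (x - y) ^ (1/2 : ℝ) * g y) ^ (2:ℝ)) ^ (1 / (2:ℝ)) := h
        _ = (∫⁻ y, k (x - y)) ^ (1/2 : ℝ) * (∫⁻ y, k (x - y) * G y) ^ (1/2 : ℝ) := by
            congr 1
            · congr 1
              exact lintegral_congr fun y => hsq _
            · congr 1
              refine lintegral_congr fun y => ?_
              rw [ENNReal.mul_rpow_of_nonneg _ _ (by norm_num : (0:ℝ) ≤ 2), hsq]
    have h2 := ENNReal.rpow_le_rpow h1 (by norm_num : (0:ℝ) ≤ 2)
    calc (∫⁻ y, k (x - y) * g y) ^ (2:ℝ)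
        ≤ ((∫⁻ y, k (x - y)) ^ (1/2 : ℝ) * (∫⁻ y, k (x - y) * G y) ^ (1/2 : ℝ)) ^ (2:ℝ) := h2
      _ = K * ∫⁻ y, k (x - y) * G y := by
          rw [ENNReal.mul_rpow_of_nonneg _ _ (by norm_num : (0:ℝ) ≤ 2), hsq, hsq,
            lint_sub_left]
  -- inner unfolding
  have hinner : ∀ x : Ed d, ∫⁻ y, k (x - y) * G y
      = ∑' n : Fin d → ℤ, ∫⁻ y, k (x - y - latVec n) * G y ∂(μΩ d) := by
    intro x
    rw [unfold (fun y => k (x - y) * G y)]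
    refine tsum_congr fun n => ?_
    refine lintegral_congr fun y => ?_
    rw [hGdef]
    simp only [hg_per]
    rw [sub_add_eq_sub_sub]
  -- a.e.-measurability of the summands
  have hHn : ∀ n : Fin d → ℤ, AEMeasurable
      (fun p : Ed d × Ed d => k (p.1 - p.2 - latVec n) * G p.2) ((μΩ d).prod (μΩ d)) :=
    fun n => (hk.comp_quasiMeasurePreserving (qmp_sub_prod n)).mul
      (hG.comp_quasiMeasurePreserving qmp_snd')
  have hcn : ∀ (n : Fin d → ℤ) (y : Ed d), (∫⁻ x, k (x - y - latVec n) ∂(μΩ d)) ≠ ∞ → True :=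
    fun _ _ _ => trivial
  -- Step B : the double integral identity
  have stepB : ∫⁻ x, (∫⁻ y, k (x - y) * G y) ∂(μΩ d) = K * ∫⁻ y, G y ∂(μΩ d) := by
    calc ∫⁻ x, (∫⁻ y, k (x - y) * G y) ∂(μΩ d)
        = ∫⁻ x, ∑' n : Fin d → ℤ, ∫⁻ y, k (x - y - latVec n) * G y ∂(μΩ d) ∂(μΩ d) := by
          exact lintegral_congr hinner
      _ = ∑' n : Fin d → ℤ, ∫⁻ x, ∫⁻ y, k (x - y - latVec n) * G y ∂(μΩ d) ∂(μΩ d) := by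
          exact lintegral_tsum fun n => aemeasurable_lintegral_right (hHn n)
      _ = ∑' n : Fin d → ℤ, ∫⁻ y, ∫⁻ x, k (x - y - latVec n) * G y ∂(μΩ d) ∂(μΩ d) := by
          refine tsum_congr fun n => ?_
          exact lintegral_lintegral_swap (hHn n)
      _ = ∑' n : Fin d → ℤ, ∫⁻ y, (∫⁻ x, k (x - y - latVec n) ∂(μΩ d)) * G y ∂(μΩ d) := by
          refine tsum_congr fun n => ?_
          refine lintegral_congr fun y => ?_
          exact lintegral_mul_const' (G y) _ (hGfin y)
      _ = ∫⁻ y, ∑' n : Fin d → ℤ, (∫⁻ x, k (x - y - latVec n) ∂(μΩ d)) * G y ∂(μΩ d) := by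
          refine (lintegral_tsum fun n => ?_).symm
          refine AEMeasurable.mul ?_ (hG.mono_measure muOmega_le_volume)
          exact aemeasurable_lintegral_right
            (hk.comp_quasiMeasurePreserving (qmp_swap_sub_prod n))
      _ = ∫⁻ y, K * G y ∂(μΩ d) := by
          refine lintegral_congr fun y => ?_
          rw [ENNReal.tsum_mul_right]
          congr 1
          -- ∑' n, ∫⁻ x in Ω, k (x - y - latVec n) = K
          have hu := unfold (fun x => k (x - y))
          rw [lintegral_sub_right_eq_self k y] at hu
          rw [← hKdef] at hu
          rw [hu]
          refine ((Equiv.neg (Fin d → ℤ)).tsum_eq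
            (fun n => ∫⁻ x, k (x - y - latVec n) ∂(μΩ d))).symm.trans ?_
          refine tsum_congr fun n => ?_
          refine lintegral_congr fun x => ?_
          congr 1
          show x - y - latVec (-n) = x + latVec n - y
          rw [latVec_neg]
          abel
      _ = K * ∫⁻ y, G y ∂(μΩ d) := lintegral_const_mul' K G hK
  calc ∫⁻ x, (∫⁻ y, k (x - y) * g y) ^ (2 : ℝ) ∂(μΩ d)
      ≤ ∫⁻ x, K * (∫⁻ y, k (x - y) * G y) ∂(μΩ d) := lintegral_mono fun x => stepA x
    _ = K * ∫⁻ x, (∫⁻ y, k (x - y) * G y) ∂(μΩ d) := lintegral_const_mul' K _ hK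
    _ = K * (K * ∫⁻ y, G y ∂(μΩ d)) := by rw [stepB]
    _ = K ^ (2:ℝ) * ∫⁻ x, G x ∂(μΩ d) := by
        rw [← mul_assoc]
        congr 1
        rw [ENNReal.rpow_two]
        ring

/-! ### Pointwise domination of the difference of fibre operators -/

lemma dom_aux
    (a a' : Ed d → ℝ) (haa' : a =ᵐ[(volume : Measure (Ed d))] a')
    (ha_int : Integrable a (volume : Measure (Ed d)))
    (w : Ed d → Ed d → ℝ) (hw_meas : Measurable (Function.uncurry w))
    (μm μp : ℝ) (hμm : 0 < μm) (hw_bdd : ∀ x y, μm ≤ w x y ∧ w x y ≤ μp)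
    (U : Ed d → ℂ) (hU : AEStronglyMeasurable U (volume : Measure (Ed d)))
    (ξ η : Ed d) (x : Ed d) :
    (‖(∫ y, ((a (x - y) * w x y : ℝ) : ℂ) *
          (U x - Complex.exp (-Complex.I * (⟪ξ, x - y⟫_ℝ : ℝ)) * U y)) -
        (∫ y, ((a (x - y) * w x y : ℝ) : ℂ) *
          (U x - Complex.exp (-Complex.I * (⟪η, x - y⟫_ℝ : ℝ)) * U y))‖₊ : ℝ≥0∞)
      ≤ ∫⁻ y, (ENNReal.ofReal (μp * ‖ξ - η‖) *
          ((‖x - y‖₊ : ℝ≥0∞) * (‖a' (x - y)‖₊ : ℝ≥0∞))) * (‖U y‖₊ : ℝ≥0∞) := by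
  have hμp : (0:ℝ) ≤ μp := le_trans hμm.le (le_trans (hw_bdd 0 0).1 (hw_bdd 0 0).2)
  set ψ : Ed d → ℂ := fun y => ((a (x - y) * w x y : ℝ) : ℂ) with hψdef
  set e : Ed d → Ed d → ℂ :=
    fun ζ y => Complex.exp (-Complex.I * (⟪ζ, x - y⟫_ℝ : ℝ)) with hedef
  -- basic measurability and integrability facts
  have hax : AEStronglyMeasurable (fun y => a (x - y)) (volume : Measure (Ed d)) :=
    ha_int.1.comp_quasiMeasurePreserving (qmp_sub_left x)
  have hwx : Measurable (w x) := hw_meas.of_uncurry_left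
  have hwbound : ∀ y, ‖w x y‖ ≤ μp := by
    intro y
    rw [Real.norm_eq_abs, abs_le]
    constructor
    · linarith [(hw_bdd x y).1, hμm, (hw_bdd x y).2]
    · exact (hw_bdd x y).2
  have hψm : AEStronglyMeasurable ψ (volume : Measure (Ed d)) := by
    exact Complex.continuous_ofReal.comp_aestronglyMeasurable
      (hax.mul hwx.aestronglyMeasurable)
  have hψint : Integrable ψ (volume : Measure (Ed d)) := by
    have h1 : Integrable (fun y => a (x - y)) (volume : Measure (Ed d)) :=
      ha_int.comp_sub_left x
    have h2 : Integrable (fun y => w x y * a (x - y)) (volume : Measure (Ed d)) :=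
      h1.bdd_mul hwx.aestronglyMeasurable (c := μp) (Filter.Eventually.of_forall hwbound)
    have h3 : Integrable (fun y => a (x - y) * w x y) (volume : Measure (Ed d)) :=
      h2.congr (Filter.Eventually.of_forall fun y => mul_comm _ _)
    exact h3.ofReal
  have hecont : ∀ ζ : Ed d, Continuous (e ζ) := by
    intro ζ
    apply Complex.continuous_exp.comp
    exact continuous_const.mul
      (Complex.continuous_ofReal.comp (continuous_const.inner (continuous_const.sub continuous_id)))
  have henorm : ∀ (ζ : Ed d) (y : Ed d), ‖e ζ y‖ = 1 := fun ζ y => norm_exp_neg_I_mul _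
  by_cases hI : Integrable (fun y => ψ y * U y) (volume : Measure (Ed d))
  · -- integrable case
    have hpos : ∀ ζ : Ed d,
        Integrable (fun y => ψ y * (U x - e ζ y * U y)) (volume : Measure (Ed d)) := by
      intro ζ
      have h1 : Integrable (fun y => ψ y * U x) (volume : Measure (Ed d)) :=
        hψint.mul_const (U x)
      have h2 : Integrable (fun y => e ζ y * (ψ y * U y)) (volume : Measure (Ed d)) :=
        hI.bdd_mul (hecont ζ).aestronglyMeasurable (c := 1) (Filter.Eventually.of_forall fun y => (henorm ζ y).le)
      exact (h1.sub h2).congr (Filter.Eventually.of_forall fun y => by simp only [Pi.sub_apply]; ring)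
    have key : (∫ y, ψ y * (U x - e ξ y * U y)) - (∫ y, ψ y * (U x - e η y * U y))
        = ∫ y, ψ y * ((e η y - e ξ y) * U y) := by
      rw [← integral_sub (hpos ξ) (hpos η)]
      exact integral_congr_ae (Filter.Eventually.of_forall fun y => by ring)
    show (‖(∫ y, ψ y * (U x - e ξ y * U y)) - (∫ y, ψ y * (U x - e η y * U y))‖₊ : ℝ≥0∞) ≤ _
    rw [key]
    refine le_trans (enorm_integral_le_lintegral_enorm _) ?_
    have hswitch : ∫⁻ y, (ENNReal.ofReal (μp * ‖ξ - η‖) *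
          ((‖x - y‖₊ : ℝ≥0∞) * (‖a (x - y)‖₊ : ℝ≥0∞))) * (‖U y‖₊ : ℝ≥0∞)
        = ∫⁻ y, (ENNReal.ofReal (μp * ‖ξ - η‖) *
          ((‖x - y‖₊ : ℝ≥0∞) * (‖a' (x - y)‖₊ : ℝ≥0∞))) * (‖U y‖₊ : ℝ≥0∞) := by
      have haex : (fun y => a (x - y)) =ᵐ[(volume : Measure (Ed d))]
          (fun y => a' (x - y)) := (qmp_sub_left x).ae_eq_comp haa'
      refine lintegral_congr_ae ?_
      filter_upwards [haex] with y hy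
      rw [show a (x - y) = a' (x - y) from hy]
    rw [← hswitch]
    refine lintegral_mono fun y => ?_
    -- pointwise estimate
    have h₁ : ‖ψ y‖ ≤ ‖a (x - y)‖ * μp := by
      rw [hψdef]
      simp only [Complex.norm_real, Real.norm_eq_abs]
      rw [abs_mul]
      refine mul_le_mul_of_nonneg_left ?_ (abs_nonneg _)
      exact (hwbound y)
    have h₂ : ‖e η y - e ξ y‖ ≤ ‖ξ - η‖ * ‖x - y‖ := by
      refine le_trans (exp_lip _ _) ?_
      rw [← inner_sub_left]
      refine le_trans (abs_real_inner_le_norm _ _) ?_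
      rw [norm_sub_rev]
    have hnorm : ‖ψ y * ((e η y - e ξ y) * U y)‖
        ≤ ((μp * ‖ξ - η‖) * (‖x - y‖ * ‖a (x - y)‖)) * ‖U y‖ := by
      rw [norm_mul, norm_mul]
      calc ‖ψ y‖ * (‖e η y - e ξ y‖ * ‖U y‖)
          ≤ (‖a (x - y)‖ * μp) * ((‖ξ - η‖ * ‖x - y‖) * ‖U y‖) := by
            gcongr
        _ = ((μp * ‖ξ - η‖) * (‖x - y‖ * ‖a (x - y)‖)) * ‖U y‖ := by ring
    calc (‖ψ y * ((e η y - e ξ y) * U y)‖₊ : ℝ≥0∞)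
        = ENNReal.ofReal ‖ψ y * ((e η y - e ξ y) * U y)‖ := (ofReal_norm_eq_enorm _).symm
      _ ≤ ENNReal.ofReal (((μp * ‖ξ - η‖) * (‖x - y‖ * ‖a (x - y)‖)) * ‖U y‖) :=
          ENNReal.ofReal_le_ofReal hnorm
      _ = (ENNReal.ofReal (μp * ‖ξ - η‖) *
            ((‖x - y‖₊ : ℝ≥0∞) * (‖a (x - y)‖₊ : ℝ≥0∞))) * (‖U y‖₊ : ℝ≥0∞) := by
          rw [ENNReal.ofReal_mul (by positivity), ENNReal.ofReal_mul (by positivity),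
            ENNReal.ofReal_mul (norm_nonneg _)]
          simp only [ofReal_norm_eq_enorm, enorm_eq_nnnorm]
  · -- non-integrable case : both integrals vanish
    have hnot : ∀ ζ : Ed d,
        ¬ Integrable (fun y => ψ y * (U x - e ζ y * U y)) (volume : Measure (Ed d)) := by
      intro ζ hcon
      have h1 : Integrable (fun y => ψ y * U x) (volume : Measure (Ed d)) :=
        hψint.mul_const (U x)
      have h2 : Integrable (fun y => e ζ y * (ψ y * U y)) (volume : Measure (Ed d)) :=
        (h1.sub hcon).congr (Filter.Eventually.of_forall fun y => by simp only [Pi.sub_apply]; ring)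
      have hcont2 : Continuous fun y : Ed d =>
          Complex.exp (Complex.I * (⟪ζ, x - y⟫_ℝ : ℝ)) := by
        apply Complex.continuous_exp.comp
        exact continuous_const.mul
          (Complex.continuous_ofReal.comp
            (continuous_const.inner (continuous_const.sub continuous_id)))
      have h3 : Integrable (fun y =>
          Complex.exp (Complex.I * (⟪ζ, x - y⟫_ℝ : ℝ)) * (e ζ y * (ψ y * U y)))
          (volume : Measure (Ed d)) :=
        h2.bdd_mul hcont2.aestronglyMeasurable (c := 1) (Filter.Eventually.of_forall fun y => (norm_exp_I_mul _).le)
      refine hI (h3.congr (Filter.Eventually.of_forall fun y => ?_))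
      show Complex.exp (Complex.I * (⟪ζ, x - y⟫_ℝ : ℝ)) *
          (Complex.exp (-Complex.I * (⟪ζ, x - y⟫_ℝ : ℝ)) * (ψ y * U y)) = ψ y * U y
      rw [← mul_assoc, ← Complex.exp_add,
        show Complex.I * ((⟪ζ, x - y⟫_ℝ : ℝ) : ℂ) + -Complex.I * ((⟪ζ, x - y⟫_ℝ : ℝ) : ℂ)
          = 0 by ring,
        Complex.exp_zero, one_mul]
    show (‖(∫ y, ψ y * (U x - e ξ y * U y)) - (∫ y, ψ y * (U x - e η y * U y))‖₊ : ℝ≥0∞) ≤ _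
    rw [integral_undef (hnot ξ), integral_undef (hnot η), sub_zero, nnnorm_zero]
    simp

end Stmt8

open Stmt8

/-- Lipschitz bound `‖𝔸(ξ) − 𝔸(η)‖ ≤ μ₊ M₁(a) |ξ − η|` for `ξ, η ∈ [−π,π)ᵈ`. -/
theorem statement8
    (d : ℕ) (hd : 1 ≤ d)
    (a : Ed d → ℝ) (w : Ed d → Ed d → ℝ) (μm μp : ℝ)
    (ha_int : Integrable a (volume : Measure (Ed d)))
    (ha_nonneg : ∀ᵐ x ∂(volume : Measure (Ed d)), 0 ≤ a x)
    (ha_ne : ¬ (a =ᵐ[(volume : Measure (Ed d))] 0))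
    (hw_meas : Measurable (Function.uncurry w))
    (hμm : 0 < μm)
    (hw_bdd : ∀ x y, μm ≤ w x y ∧ w x y ≤ μp)
    (hw_per : ∀ (x y : Ed d) (m n : Fin d → ℤ),
      w (x + toEd fun i => (m i : ℝ)) (y + toEd fun i => (n i : ℝ)) = w x y)
    (hM1 : Integrable (fun x => ‖x‖ * a x) (volume : Measure (Ed d)))
    -- the family of fibre operators 𝔸(ξ) on L²(Ω)
    (A : Ed d → (Lp ℂ 2 (μΩ d) →L[ℂ] Lp ℂ 2 (μΩ d)))
    (hA : ∀ (ξ : Ed d) (u : Lp ℂ 2 (μΩ d)), ∀ᵐ x ∂(μΩ d),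
      (A ξ u : Ed d → ℂ) x
        = ∫ y, ((a (x - y) * w x y : ℝ) : ℂ)
            * (perExt (u : Ed d → ℂ) x
               - Complex.exp (-Complex.I * (⟪ξ, x - y⟫_ℝ : ℝ)) * perExt (u : Ed d → ℂ) y)) :
    ∀ ξ η : Ed d, (∀ i, ξ i ∈ Set.Ico (-π) π) → (∀ i, η i ∈ Set.Ico (-π) π) →
      ‖A ξ - A η‖ ≤ μp * (∫ x, ‖x‖ * a x) * ‖ξ - η‖ := by
  intro ξ η hξ hη
  have hμp : (0:ℝ) ≤ μp := le_trans hμm.le (le_trans (hw_bdd 0 0).1 (hw_bdd 0 0).2)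
  have hM1nn : (0:ℝ) ≤ ∫ x, ‖x‖ * a x :=
    integral_nonneg_of_ae (by filter_upwards [ha_nonneg] with x hx; positivity)
  have hC : (0:ℝ) ≤ μp * (∫ x, ‖x‖ * a x) * ‖ξ - η‖ := by positivity
  -- a measurable representative of `a`
  set a' : Ed d → ℝ := (ha_int.1).mk a with ha'def
  have haa' : a =ᵐ[(volume : Measure (Ed d))] a' := ha_int.1.ae_eq_mk
  have ha'm : StronglyMeasurable a' := ha_int.1.stronglyMeasurable_mk
  set c : ℝ≥0∞ := ENNReal.ofReal (μp * ‖ξ - η‖) with hcdef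
  have hcne : c ≠ ∞ := ENNReal.ofReal_ne_top
  set k : Ed d → ℝ≥0∞ := fun z => c * ((‖z‖₊ : ℝ≥0∞) * (‖a' z‖₊ : ℝ≥0∞)) with hkdef
  have hk : AEMeasurable k (volume : Measure (Ed d)) := by
    apply AEMeasurable.const_mul
    exact (measurable_nnnorm.coe_nnreal_ennreal.aemeasurable.mul
      (ha'm.measurable.nnnorm.coe_nnreal_ennreal.aemeasurable))
  have hKeq : ∫⁻ z, k z = ENNReal.ofReal (μp * (∫ x, ‖x‖ * a x) * ‖ξ - η‖) := by
    have h1 : ∫⁻ z, k z = c * ∫⁻ z, (‖z‖₊ : ℝ≥0∞) * (‖a' z‖₊ : ℝ≥0∞) :=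
      lintegral_const_mul' c _ hcne
    have h2 : ∫⁻ z, (‖z‖₊ : ℝ≥0∞) * (‖a' z‖₊ : ℝ≥0∞)
        = ∫⁻ z, ENNReal.ofReal (‖z‖ * a z) := by
      refine lintegral_congr_ae ?_
      filter_upwards [haa', ha_nonneg] with z hz1 hz2
      rw [← hz1, ← enorm_eq_nnnorm, ← enorm_eq_nnnorm, ENNReal.ofReal_mul (norm_nonneg _), ofReal_norm_eq_enorm,
        Real.enorm_eq_ofReal hz2]
    have h3 : ∫⁻ z, ENNReal.ofReal (‖z‖ * a z) = ENNReal.ofReal (∫ x, ‖x‖ * a x) :=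
      (MeasureTheory.ofReal_integral_eq_lintegral_ofReal hM1
        (by filter_upwards [ha_nonneg] with z hz; positivity)).symm
    rw [h1, h2, h3, hcdef, ← ENNReal.ofReal_mul (by positivity)]
    congr 1
    ring
  have hK : ∫⁻ z, k z ≠ ∞ := by rw [hKeq]; exact ENNReal.ofReal_ne_top
  refine ContinuousLinearMap.opNorm_le_bound _ hC ?_
  intro u
  set U : Ed d → ℂ := perExt (u : Ed d → ℂ) with hUdef
  have hU : AEStronglyMeasurable U (volume : Measure (Ed d)) :=
    perExt_aesm (Lp.aestronglyMeasurable u)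
  set g : Ed d → ℝ≥0∞ := fun y => (‖U y‖₊ : ℝ≥0∞) with hgdef
  have hg : AEMeasurable g (volume : Measure (Ed d)) := hU.enorm
  have hgfin : ∀ y, g y ≠ ∞ := fun y => ENNReal.coe_ne_top
  have hg_per : ∀ (y : Ed d) (n : Fin d → ℤ), g (y + latVec n) = g y := by
    intro y n
    rw [hgdef]
    simp only
    rw [hUdef, perExt_periodic]
  have hdom : ∀ᵐ x ∂(μΩ d),
      (‖(A ξ u : Ed d → ℂ) x - (A η u : Ed d → ℂ) x‖₊ : ℝ≥0∞)
        ≤ ∫⁻ y, k (x - y) * g y := by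
    filter_upwards [hA ξ u, hA η u] with x h1 h2
    rw [h1, h2]
    exact dom_aux a a' haa' ha_int w hw_meas μm μp hμm hw_bdd U hU ξ η x
  have hq : ∫⁻ x, ((‖(A ξ u : Ed d → ℂ) x - (A η u : Ed d → ℂ) x‖₊ : ℝ≥0∞)) ^ (2:ℝ) ∂(μΩ d)
      ≤ (∫⁻ z, k z) ^ (2:ℝ) * ∫⁻ x, g x ^ (2:ℝ) ∂(μΩ d) := by
    refine le_trans (lintegral_mono_ae ?_) (schur k hk hK g hg hgfin hg_per)
    filter_upwards [hdom] with x hx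
    exact ENNReal.rpow_le_rpow hx (by norm_num)
  have hgΩ : ∫⁻ x, g x ^ (2:ℝ) ∂(μΩ d)
      = ∫⁻ x, ((‖(u : Ed d → ℂ) x‖₊ : ℝ≥0∞)) ^ (2:ℝ) ∂(μΩ d) := by
    refine lintegral_congr_ae ?_
    filter_upwards [ae_restrict_mem (measurableSet_cellΩ (d := d))] with x hx
    rw [hgdef]
    simp only
    rw [hUdef, perExt_eq_on_cell _ hx]
  have h2ne0 : (2:ℝ≥0∞) ≠ 0 := by norm_num
  have h2netop : (2:ℝ≥0∞) ≠ ∞ := by norm_num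
  have hcoe : ((A ξ - A η) u : Ed d → ℂ) =ᵐ[μΩ d]
      fun x => (A ξ u : Ed d → ℂ) x - (A η u : Ed d → ℂ) x := by
    have h1 : (A ξ - A η) u = A ξ u - A η u := ContinuousLinearMap.sub_apply _ _ _
    rw [h1]
    exact Lp.coeFn_sub _ _
  rw [Lp.norm_def, Lp.norm_def]
  have he1 : eLpNorm ((A ξ - A η) u : Ed d → ℂ) 2 (μΩ d)
      = (∫⁻ x, ((‖(A ξ u : Ed d → ℂ) x - (A η u : Ed d → ℂ) x‖₊ : ℝ≥0∞)) ^ (2:ℝ) ∂(μΩ d))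
          ^ (1/2 : ℝ) := by
    rw [eLpNorm_congr_ae hcoe, eLpNorm_eq_lintegral_rpow_enorm_toReal h2ne0 h2netop]
    simp [ENNReal.toReal_ofNat, enorm_eq_nnnorm]
  have he2 : eLpNorm (u : Ed d → ℂ) 2 (μΩ d)
      = (∫⁻ x, ((‖(u : Ed d → ℂ) x‖₊ : ℝ≥0∞)) ^ (2:ℝ) ∂(μΩ d)) ^ (1/2:ℝ) := by
    rw [eLpNorm_eq_lintegral_rpow_enorm_toReal h2ne0 h2netop]
    simp [ENNReal.toReal_ofNat, enorm_eq_nnnorm]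
  have hfinal : eLpNorm ((A ξ - A η) u : Ed d → ℂ) 2 (μΩ d)
      ≤ ENNReal.ofReal (μp * (∫ x, ‖x‖ * a x) * ‖ξ - η‖) * eLpNorm (u : Ed d → ℂ) 2 (μΩ d) := by
    rw [he1, he2, ← hKeq]
    calc (∫⁻ x, ((‖(A ξ u : Ed d → ℂ) x - (A η u : Ed d → ℂ) x‖₊ : ℝ≥0∞)) ^ (2:ℝ) ∂(μΩ d))
          ^ (1/2 : ℝ)
        ≤ ((∫⁻ z, k z) ^ (2:ℝ) *
            ∫⁻ x, ((‖(u : Ed d → ℂ) x‖₊ : ℝ≥0∞)) ^ (2:ℝ) ∂(μΩ d)) ^ (1/2:ℝ) := by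
          refine ENNReal.rpow_le_rpow ?_ (by norm_num)
          rw [← hgΩ]
          exact hq
      _ = (∫⁻ z, k z) *
            (∫⁻ x, ((‖(u : Ed d → ℂ) x‖₊ : ℝ≥0∞)) ^ (2:ℝ) ∂(μΩ d)) ^ (1/2:ℝ) := by
          rw [ENNReal.mul_rpow_of_nonneg _ _ (by norm_num : (0:ℝ) ≤ 1/2), ← ENNReal.rpow_mul]
          norm_num
  have hne : ENNReal.ofReal (μp * (∫ x, ‖x‖ * a x) * ‖ξ - η‖)
      * eLpNorm (u : Ed d → ℂ) 2 (μΩ d) ≠ ∞ :=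
    ENNReal.mul_ne_top ENNReal.ofReal_ne_top (Lp.eLpNorm_ne_top u)
  refine le_trans (ENNReal.toReal_mono hne hfinal) ?_
  rw [ENNReal.toReal_mul, ENNReal.toReal_ofReal hC]
end
end
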